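/- When algorithm Counting-Backoff is executed on a channel with collision detection against a 1-activating adversary of type (ρ, b) with ρ < 1/3 and b > 1, every injected packet is heard within (3b − 3)/(1 − 3ρ) rounds of its injection; that is, the packet latency of Counting-Backoff against such an adversary is at most (3b − 3)/(1 − 3ρ). -/

import Mathlib

/-- Admissibility of a 1-activating injection pattern `a` (in round `t`, a fresh passive
station labelled `t` is activated with `a t` packets, when `a t > 0`) for the leaky-bucket
adversary of type `(ρ, b)`: in every contiguous interval of rounds the total number of
injected packets is at most `ρ·|τ| + b`. -/
def Admissible (ρ : ℝ) (b : ℕ) (a : ℕ → ℕ) : Prop :=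
  ∀ s n : ℕ, ((∑ t ∈ Finset.Ico s (s + n), a t : ℕ) : ℝ) ≤ ρ * n + b

/-- One round of algorithm Counting-Backoff on a channel with collision detection.
A configuration `c` assigns to every station `v` (identified with its activation round)
its number `c.1 v` of pending packets and its integer `c.2 v` = backoff_counter, both at
the beginning of the round.  An active station transmits iff its backoff_counter is `≤ 1`;
after a collision every active station increments its counter, after a silent round it
decrements it; a station whose own packet was heard sets the counter to 1 if it is still
active, and a passive station has counter 0.  At the end of round `t` the station `t`
receives its `a t` injected packets (with counter 0). -/
def cbStep (a : ℕ → ℕ) (t : ℕ) (c : (ℕ → ℕ) × (ℕ → ℤ)) : (ℕ → ℕ) × (ℕ → ℤ) :=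
  let pend := c.1
  let ctr := c.2
  let tx : Finset ℕ := (Finset.range t).filter fun v => 0 < pend v ∧ ctr v ≤ 1
  (fun v => (if v ∈ tx ∧ tx.card = 1 then pend v - 1 else pend v) + (if v = t then a t else 0),
   fun v =>
    if pend v = 0 then 0
    else if v ∈ tx ∧ tx.card = 1 then (if pend v - 1 = 0 then 0 else 1)
    else if 2 ≤ tx.card then ctr v + 1
    else if tx.card = 0 then ctr v - 1
    else ctr v)

/-- The configuration of the execution of Counting-Backoff against the 1-activating
injection pattern `a` at the beginning of round `t`: `(cbCfg a t).1 v` is the number of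
packets pending at station `v` and `(cbCfg a t).2 v` is its backoff_counter. -/
def cbCfg (a : ℕ → ℕ) : ℕ → (ℕ → ℕ) × (ℕ → ℤ)
  | 0 => (fun _ => 0, fun _ => 0)
  | t + 1 => cbStep a t (cbCfg a t)

def txs (a : ℕ → ℕ) (r : ℕ) : Finset ℕ :=
  (Finset.range r).filter fun u => 0 < (cbCfg a r).1 u ∧ (cbCfg a r).2 u ≤ 1

lemma cbCfg_succ (a : ℕ → ℕ) (r : ℕ) : cbCfg a (r+1) = cbStep a r (cbCfg a r) := rfl

lemma pend_succ (a : ℕ → ℕ) (r u : ℕ) : (cbCfg a (r+1)).1 u =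
    (if u ∈ txs a r ∧ (txs a r).card = 1 then (cbCfg a r).1 u - 1 else (cbCfg a r).1 u)
    + (if u = r then a r else 0) := rfl

lemma ctr_succ (a : ℕ → ℕ) (r u : ℕ) : (cbCfg a (r+1)).2 u =
    if (cbCfg a r).1 u = 0 then 0
    else if u ∈ txs a r ∧ (txs a r).card = 1 then (if (cbCfg a r).1 u - 1 = 0 then 0 else 1)
    else if 2 ≤ (txs a r).card then (cbCfg a r).2 u + 1
    else if (txs a r).card = 0 then (cbCfg a r).2 u - 1
    else (cbCfg a r).2 u := rfl

lemma mem_txs {a : ℕ → ℕ} {r u : ℕ} : u ∈ txs a r ↔ u < r ∧ 0 < (cbCfg a r).1 u ∧ (cbCfg a r).2 u ≤ 1 := by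
  simp [txs, Finset.mem_filter, Finset.mem_range, and_assoc]

/-- The structural invariant of Counting-Backoff. -/
structure CBInv (a : ℕ → ℕ) (r : ℕ) : Prop where
  ha : ∀ u, r ≤ u → (cbCfg a r).1 u = 0
  hb : ∀ u, (cbCfg a r).1 u = 0 → (cbCfg a r).2 u = 0
  hc : ∀ u x, u < x → 0 < (cbCfg a r).1 u → 0 < (cbCfg a r).1 x →
        (cbCfg a r).2 x < (cbCfg a r).2 u
  hd : ∀ u, 0 < (cbCfg a r).1 u → u + 1 = r ∨ 1 ≤ (cbCfg a r).2 u
  he : ∀ u, 0 ≤ (cbCfg a r).2 u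

lemma CBInv.lt_of_active {a : ℕ → ℕ} {r u : ℕ} (h : CBInv a r)
    (hu : 0 < (cbCfg a r).1 u) : u < r := by
  by_contra hh
  exact absurd (h.ha u (le_of_not_gt hh)) (by omega)

lemma CBInv.two_le_of_notin {a : ℕ → ℕ} {r u : ℕ} (h : CBInv a r)
    (hu : 0 < (cbCfg a r).1 u) (hn : u ∉ txs a r) : 2 ≤ (cbCfg a r).2 u := by
  have hlt := h.lt_of_active hu
  rw [mem_txs] at hn
  push_neg at hn
  exact hn hlt hu

/-- any two distinct members of txs: the larger one is the fresh station r-1,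
with counter 0, and the smaller has counter 1. -/
lemma txs_pair {a : ℕ → ℕ} {r u x : ℕ} (h : CBInv a r)
    (hu : u ∈ txs a r) (hx : x ∈ txs a r) (hux : u < x) :
    x + 1 = r ∧ (cbCfg a r).2 x = 0 ∧ (cbCfg a r).2 u = 1 := by
  rw [mem_txs] at hu hx
  have h1 : (cbCfg a r).2 x < (cbCfg a r).2 u := h.hc u x hux hu.2.1 hx.2.1
  have h2 := h.he x
  have h3 := h.he u
  have hx0 : (cbCfg a r).2 x = 0 := by omega
  have hxr : x + 1 = r := by
    rcases h.hd x hx.2.1 with h4 | h4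
    · exact h4
    · omega
  refine ⟨hxr, hx0, ?_⟩
  rcases h.hd u hu.2.1 with h4 | h4
  · omega
  · omega

lemma collision_struct {a : ℕ → ℕ} {r : ℕ} (h : CBInv a r)
    (h2 : 2 ≤ (txs a r).card) :
    1 ≤ r ∧ (r-1) ∈ txs a r ∧ 0 < (cbCfg a r).1 (r-1) := by
  obtain ⟨u, hu, x, hx, hux⟩ := Finset.one_lt_card.mp h2
  rcases lt_or_gt_of_ne hux with hlt | hlt
  · obtain ⟨hxr, -, -⟩ := txs_pair h hu hx hlt
    have : x = r - 1 := by omega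
    subst this
    exact ⟨by omega, hx, (mem_txs.mp hx).2.1⟩
  · obtain ⟨hxr, -, -⟩ := txs_pair h hx hu hlt
    have : u = r - 1 := by omega
    subst this
    exact ⟨by omega, hu, (mem_txs.mp hu).2.1⟩

theorem cbInv (a : ℕ → ℕ) : ∀ r, CBInv a r := by
  intro r
  induction r with
  | zero =>
      refine ⟨fun u _ => rfl, fun u _ => rfl, ?_, ?_, fun u => le_refl 0⟩
      · intro u x _ hu _; simp [cbCfg] at hu
      · intro u hu; simp [cbCfg] at hu
  | succ r ih =>
      have hfresh : (cbCfg a r).1 r = 0 := ih.ha r le_rfl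
      -- silence: if card = 0 every active station has counter ≥ 2
      have hsil : (txs a r).card = 0 → ∀ u, 0 < (cbCfg a r).1 u → 2 ≤ (cbCfg a r).2 u := by
        intro h0 u hu
        apply ih.two_le_of_notin hu
        intro hmem
        rw [Finset.card_eq_zero] at h0
        simp [h0] at hmem
      -- heard: if txs = {w}, any active u ≠ w has counter ≥ 2
      have hheard : ∀ w, txs a r = {w} → ∀ u, 0 < (cbCfg a r).1 u → u ≠ w →
          2 ≤ (cbCfg a r).2 u := by
        intro w hw u hu hne
        apply ih.two_le_of_notin hu
        rw [hw]; simp [hne]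
      -- if active in new round and not fresh, active in old round
      have hPold : ∀ y, y ≠ r → 0 < (cbCfg a (r+1)).1 y → 0 < (cbCfg a r).1 y := by
        intro y hyr hy
        rw [pend_succ, if_neg hyr, add_zero] at hy
        by_cases hhit : y ∈ txs a r ∧ (txs a r).card = 1
        · rw [if_pos hhit] at hy; omega
        · rwa [if_neg hhit] at hy
      have hfreshK : (cbCfg a (r+1)).2 r = 0 := by
        rw [ctr_succ, if_pos hfresh]
      -- counter formulas by round type
      have hKcol : 2 ≤ (txs a r).card → ∀ y, 0 < (cbCfg a r).1 y →
          (cbCfg a (r+1)).2 y = (cbCfg a r).2 y + 1 := by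
        intro h2 y hy
        rw [ctr_succ, if_neg (by omega), if_neg (fun h => by omega), if_pos h2]
      have hKsil : (txs a r).card = 0 → ∀ y, 0 < (cbCfg a r).1 y →
          (cbCfg a (r+1)).2 y = (cbCfg a r).2 y - 1 := by
        intro h0 y hy
        rw [ctr_succ, if_neg (by omega), if_neg (fun h => by omega),
          if_neg (by omega), if_pos h0]
      have hKheard : ∀ w, txs a r = {w} → ∀ y, 0 < (cbCfg a r).1 y → y ≠ w →
          (cbCfg a (r+1)).2 y = (cbCfg a r).2 y := by
        intro w hw y hy hyw
        have hc1 : (txs a r).card = 1 := by rw [hw]; simp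
        rw [ctr_succ, if_neg (by omega), if_neg (fun h => by
          rw [hw] at h; exact hyw (Finset.mem_singleton.mp h.1)),
          if_neg (by omega), if_neg (by omega)]
      have hKw : ∀ w, txs a r = {w} → 0 < (cbCfg a (r+1)).1 w → w ≠ r →
          (cbCfg a (r+1)).2 w = 1 := by
        intro w hw hw1 hwr
        have hc1 : (txs a r).card = 1 := by rw [hw]; simp
        have hmem : w ∈ txs a r := by rw [hw]; simp
        have hwp : 0 < (cbCfg a r).1 w := (mem_txs.mp hmem).2.1
        have hhit : w ∈ txs a r ∧ (txs a r).card = 1 := ⟨hmem, hc1⟩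
        rw [pend_succ, if_pos hhit, if_neg hwr, add_zero] at hw1
        rw [ctr_succ, if_neg (by omega), if_pos hhit, if_neg (by omega)]
      constructor
      · -- ha
        intro u hu
        rw [pend_succ]
        have h1 : u ∉ txs a r := fun hh => by
          have := (mem_txs.mp hh).1; omega
        have h2 : u ≠ r := by omega
        simp only [h1, false_and, if_false, h2, if_neg h2, add_zero]
        exact ih.ha u (by omega)
      · -- hb
        intro u hu
        rw [pend_succ] at hu
        rw [ctr_succ]
        by_cases hp : (cbCfg a r).1 u = 0
        · simp [hp]
        · rw [if_neg hp]
          by_cases hhit : u ∈ txs a r ∧ (txs a r).card = 1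
          · have hur : u ≠ r := by have := (mem_txs.mp hhit.1).1; omega
            rw [if_pos hhit] at hu ⊢
            rw [if_neg hur, add_zero] at hu
            simp [hu]
          · by_cases hur : u = r
            · subst hur; exact absurd hfresh hp
            · rw [if_neg hhit, if_neg hur, add_zero] at hu
              exact absurd hu hp
      · -- hc
        intro u x hux hu hx
        have hxr : x < r + 1 := by
          by_contra hh
          rw [pend_succ] at hx
          have h1 : x ∉ txs a r := fun hh2 => by have := (mem_txs.mp hh2).1; omega
          have h2 : x ≠ r := by omega
          rw [if_neg (fun hc => h1 hc.1), if_neg h2, add_zero] at hx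
          exact absurd (ih.ha x (by omega)) (by omega)
        have hur : u ≠ r := by omega
        have hu' : 0 < (cbCfg a r).1 u := hPold u hur hu
        by_cases h2 : 2 ≤ (txs a r).card
        · -- collision
          rcases Nat.lt_succ_iff_lt_or_eq.mp hxr with hxlt | hxeq
          · have hx' : 0 < (cbCfg a r).1 x := hPold x (by omega) hx
            rw [hKcol h2 u hu', hKcol h2 x hx']
            have := ih.hc u x hux hu' hx'
            omega
          · subst hxeq
            rw [hfreshK, hKcol h2 u hu']
            have := ih.he u
            omega
        · by_cases h1 : (txs a r).card = 1
          · -- heard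
            obtain ⟨w, hw⟩ := Finset.card_eq_one.mp h1
            rcases Nat.lt_succ_iff_lt_or_eq.mp hxr with hxlt | hxeq
            · have hx' : 0 < (cbCfg a r).1 x := hPold x (by omega) hx
              by_cases hxw : x = w
              · subst hxw
                rw [hKw x hw hx (by omega)]
                have huw : u ≠ x := by omega
                rw [hKheard x hw u hu' huw]
                exact lt_of_lt_of_le (by norm_num) (hheard x hw u hu' huw)
              · by_cases huw : u = w
                · subst huw
                  exfalso
                  have hKx := hheard u hw x hx' hxw
                  have hKu : (cbCfg a r).2 u ≤ 1 := by
                    have : u ∈ txs a r := by rw [hw]; simp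
                    exact (mem_txs.mp this).2.2
                  have := ih.hc u x hux hu' hx'
                  omega
                · rw [hKheard w hw u hu' huw, hKheard w hw x hx' hxw]
                  exact ih.hc u x hux hu' hx'
            · subst hxeq
              rw [hfreshK]
              by_cases huw : u = w
              · subst huw
                rw [hKw u hw hu hur]
                norm_num
              · rw [hKheard w hw u hu' huw]
                exact lt_of_lt_of_le (by norm_num) (hheard w hw u hu' huw)
          · -- silence
            have h0 : (txs a r).card = 0 := by omega
            rcases Nat.lt_succ_iff_lt_or_eq.mp hxr with hxlt | hxeq
            · have hx' : 0 < (cbCfg a r).1 x := hPold x (by omega) hx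
              rw [hKsil h0 u hu', hKsil h0 x hx']
              have := ih.hc u x hux hu' hx'
              omega
            · subst hxeq
              rw [hfreshK, hKsil h0 u hu']
              have := hsil h0 u hu'
              omega
      · -- hd
        intro u hu
        by_cases hur : u = r
        · left; omega
        · right
          have hu' : 0 < (cbCfg a r).1 u := hPold u hur hu
          by_cases h2 : 2 ≤ (txs a r).card
          · rw [hKcol h2 u hu']
            have := ih.he u
            omega
          · by_cases h1 : (txs a r).card = 1
            · obtain ⟨w, hw⟩ := Finset.card_eq_one.mp h1
              by_cases huw : u = w
              · subst huw; rw [hKw u hw hu hur]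
              · rw [hKheard w hw u hu' huw]
                have := hheard w hw u hu' huw
                omega
            · have h0 : (txs a r).card = 0 := by omega
              rw [hKsil h0 u hu']
              have := hsil h0 u hu'
              omega
      · -- he
        intro u
        by_cases hp : (cbCfg a r).1 u = 0
        · rw [ctr_succ, if_pos hp]
        · have hu' : 0 < (cbCfg a r).1 u := by omega
          rw [ctr_succ, if_neg hp]
          by_cases hhit : u ∈ txs a r ∧ (txs a r).card = 1
          · rw [if_pos hhit]
            split <;> norm_num
          · rw [if_neg hhit]
            by_cases h2 : 2 ≤ (txs a r).card
            · rw [if_pos h2]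
              have := ih.he u
              omega
            · rw [if_neg h2]
              by_cases h0 : (txs a r).card = 0
              · rw [if_pos h0]
                have := hsil h0 u hu'
                omega
              · rw [if_neg h0]
                exact ih.he u

lemma hit_iff {a : ℕ → ℕ} {r u : ℕ} :
    (u ∈ txs a r ∧ (txs a r).card = 1) ↔ txs a r = {u} := by
  constructor
  · rintro ⟨hm, hc⟩
    obtain ⟨w, hw⟩ := Finset.card_eq_one.mp hc
    rw [hw] at hm ⊢
    rw [Finset.mem_singleton] at hm
    rw [hm]
  · intro h
    rw [h]
    simp

lemma pend_zero_of_le {a : ℕ → ℕ} {r u : ℕ} (h : r ≤ u) : (cbCfg a r).1 u = 0 :=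
  (cbInv a r).ha u h

lemma pend_self (a : ℕ → ℕ) (u : ℕ) : (cbCfg a (u+1)).1 u = a u := by
  rw [pend_succ]
  have h1 : u ∉ txs a u := fun hh => (mem_txs.mp hh).1.false
  rw [if_neg (fun hc => h1 hc.1), pend_zero_of_le le_rfl, if_pos rfl, zero_add]

lemma pend_step {a : ℕ → ℕ} {r u : ℕ} (h : u ≠ r) :
    (cbCfg a (r+1)).1 u =
      if txs a r = {u} then (cbCfg a r).1 u - 1 else (cbCfg a r).1 u := by
  rw [pend_succ, if_neg h, add_zero]
  congr 1
  · exact propext hit_iff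

lemma pend_le_succ {a : ℕ → ℕ} {r u : ℕ} (h : u ≠ r) :
    (cbCfg a (r+1)).1 u ≤ (cbCfg a r).1 u := by
  rw [pend_step h]
  split <;> omega

lemma pend_le {a : ℕ → ℕ} {r s u : ℕ} (h : u < r) (hrs : r ≤ s) :
    (cbCfg a s).1 u ≤ (cbCfg a r).1 u := by
  induction s, hrs using Nat.le_induction with
  | base => exact le_rfl
  | succ s hs ihs => exact le_trans (pend_le_succ (by omega)) ihs

lemma ctr_col {a : ℕ → ℕ} {r y : ℕ} (h2 : 2 ≤ (txs a r).card)
    (hy : 0 < (cbCfg a r).1 y) :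
    (cbCfg a (r+1)).2 y = (cbCfg a r).2 y + 1 := by
  rw [ctr_succ, if_neg (by omega), if_neg (fun h => by omega), if_pos h2]

lemma ctr_sil {a : ℕ → ℕ} {r y : ℕ} (h0 : (txs a r).card = 0)
    (hy : 0 < (cbCfg a r).1 y) :
    (cbCfg a (r+1)).2 y = (cbCfg a r).2 y - 1 := by
  rw [ctr_succ, if_neg (by omega), if_neg (fun h => by omega), if_neg (by omega),
    if_pos h0]

lemma ctr_heard_other {a : ℕ → ℕ} {r y w : ℕ} (hw : txs a r = {w})
    (hy : 0 < (cbCfg a r).1 y) (hyw : y ≠ w) :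
    (cbCfg a (r+1)).2 y = (cbCfg a r).2 y := by
  have hc1 : (txs a r).card = 1 := by rw [hw]; simp
  rw [ctr_succ, if_neg (by omega), if_neg (fun h => by
      rw [hw] at h; exact hyw (Finset.mem_singleton.mp h.1)),
    if_neg (by omega), if_neg (by omega)]

lemma ctr_heard_self {a : ℕ → ℕ} {r w : ℕ} (hw : txs a r = {w})
    (h1 : 0 < (cbCfg a (r+1)).1 w) (hwr : w ≠ r) :
    (cbCfg a (r+1)).2 w = 1 := by
  have hc1 : (txs a r).card = 1 := by rw [hw]; simp
  have hmem : w ∈ txs a r := by rw [hw]; simp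
  have hwp : 0 < (cbCfg a r).1 w := (mem_txs.mp hmem).2.1
  have hhit : w ∈ txs a r ∧ (txs a r).card = 1 := ⟨hmem, hc1⟩
  rw [pend_succ, if_pos hhit, if_neg hwr, add_zero] at h1
  rw [ctr_succ, if_neg (by omega), if_pos hhit, if_neg (by omega)]

lemma ctr_fresh (a : ℕ → ℕ) (u : ℕ) : (cbCfg a (u+1)).2 u = 0 := by
  rw [ctr_succ, if_pos (pend_zero_of_le le_rfl)]

lemma pend_succ' (a : ℕ → ℕ) (r u : ℕ) : (cbCfg a (r+1)).1 u =
    (if txs a r = {u} then (cbCfg a r).1 u - 1 else (cbCfg a r).1 u)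
    + (if u = r then a r else 0) := by
  rw [pend_succ]
  congr 1
  exact if_congr hit_iff rfl rfl

section Counting

variable (a : ℕ → ℕ) (v : ℕ)

/-- number of rounds in `[v+1, s)` heard by `v`. -/
def cntHv (s : ℕ) : ℕ := ∑ r ∈ Finset.Ico (v+1) s, if txs a r = {v} then 1 else 0
/-- number of rounds heard by another station. -/
def cntHW (s : ℕ) : ℕ :=
  ∑ r ∈ Finset.Ico (v+1) s, if (txs a r).card = 1 ∧ ¬ txs a r = {v} then 1 else 0
/-- number of collision rounds. -/
def cntC (s : ℕ) : ℕ := ∑ r ∈ Finset.Ico (v+1) s, if 2 ≤ (txs a r).card then 1 else 0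
/-- number of silent rounds. -/
def cntZ (s : ℕ) : ℕ := ∑ r ∈ Finset.Ico (v+1) s, if (txs a r).card = 0 then 1 else 0

lemma cnt_partition (s : ℕ) :
    s - (v+1) = cntHv a v s + cntHW a v s + cntC a v s + cntZ a v s := by
  have hpoint : ∀ r : ℕ, ((if txs a r = {v} then 1 else 0)
      + (if (txs a r).card = 1 ∧ ¬ txs a r = {v} then 1 else 0)
      + (if 2 ≤ (txs a r).card then 1 else 0)
      + (if (txs a r).card = 0 then 1 else 0) : ℕ) = 1 := by
    intro r
    by_cases h1 : txs a r = {v}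
    · have hc : (txs a r).card = 1 := by rw [h1]; simp
      simp [h1, hc]
    · by_cases hc1 : (txs a r).card = 1
      · simp [h1, hc1]
      · by_cases hc2 : 2 ≤ (txs a r).card
        · have hc0 : ¬ (txs a r).card = 0 := by omega
          simp [h1, hc1, hc2, hc0]
        · have hc0 : (txs a r).card = 0 := by omega
          simp [h1, hc1, hc2, hc0]
  have h2 : cntHv a v s + cntHW a v s + cntC a v s + cntZ a v s
      = ∑ r ∈ Finset.Ico (v+1) s, (1:ℕ) := by
    rw [cntHv, cntHW, cntC, cntZ, ← Finset.sum_add_distrib, ← Finset.sum_add_distrib,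
      ← Finset.sum_add_distrib]
    exact Finset.sum_congr rfl fun r _ => hpoint r
  rw [h2, Finset.sum_const, smul_eq_mul, mul_one, Nat.card_Ico]

lemma pendv_telescope : ∀ s, v+1 ≤ s → (cbCfg a s).1 v + cntHv a v s = a v := by
  intro s hs
  induction s, hs using Nat.le_induction with
  | base =>
      rw [pend_self]
      simp [cntHv]
  | succ s hs ihs =>
      rw [cntHv, Finset.sum_Ico_succ_top (by omega), ← cntHv]
      rw [pend_step (by omega : v ≠ s)]
      by_cases h1 : txs a s = {v}
      · have hm : v ∈ txs a s := by rw [h1]; simp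
        have := (mem_txs.mp hm).2.1
        rw [if_pos h1, if_pos h1]
        omega
      · rw [if_neg h1, if_neg h1]
        omega

lemma ctr_telescope (t : ℕ)
    (hact : ∀ s, v+1 ≤ s → s ≤ t → 0 < (cbCfg a s).1 v) :
    ∀ s, v+1 ≤ s → s ≤ t →
      (cbCfg a s).2 v + (cntZ a v s : ℤ) ≤ (cntHv a v s : ℤ) + (cntC a v s : ℤ) := by
  intro s hs
  induction s, hs using Nat.le_induction with
  | base =>
      intro _
      rw [ctr_fresh]
      simp [cntHv, cntC, cntZ]
  | succ s hs ihs =>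
      intro hst
      have hst' : s ≤ t := by omega
      have ih := ihs hst'
      have hv : 0 < (cbCfg a s).1 v := hact s hs hst'
      have hzs : cntZ a v (s+1) = cntZ a v s + (if (txs a s).card = 0 then 1 else 0) := by
        rw [cntZ, Finset.sum_Ico_succ_top (by omega), ← cntZ]
      have hhs : cntHv a v (s+1) = cntHv a v s + (if txs a s = {v} then 1 else 0) := by
        rw [cntHv, Finset.sum_Ico_succ_top (by omega), ← cntHv]
      have hcs : cntC a v (s+1) = cntC a v s + (if 2 ≤ (txs a s).card then 1 else 0) := by
        rw [cntC, Finset.sum_Ico_succ_top (by omega), ← cntC]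
      by_cases h1 : txs a s = {v}
      · have hK1 : (cbCfg a (s+1)).2 v = 1 :=
          ctr_heard_self h1 (hact (s+1) (by omega) hst) (by omega)
        have hc1 : (txs a s).card = 1 := by rw [h1]; simp
        have hKnn := (cbInv a s).he v
        have e1 : (if txs a s = {v} then (1:ℕ) else 0) = 1 := if_pos h1
        have e2 : (if 2 ≤ (txs a s).card then (1:ℕ) else 0) = 0 := if_neg (by omega)
        have e3 : (if (txs a s).card = 0 then (1:ℕ) else 0) = 0 := if_neg (by omega)
        rw [hzs, hhs, hcs, hK1, e1, e2, e3]
        push_cast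
        omega
      · have e1 : (if txs a s = {v} then (1:ℕ) else 0) = 0 := if_neg h1
        by_cases hc2 : 2 ≤ (txs a s).card
        · have e2 : (if 2 ≤ (txs a s).card then (1:ℕ) else 0) = 1 := if_pos hc2
          have e3 : (if (txs a s).card = 0 then (1:ℕ) else 0) = 0 := if_neg (by omega)
          rw [hzs, hhs, hcs, ctr_col hc2 hv, e1, e2, e3]
          push_cast
          omega
        · have e2 : (if 2 ≤ (txs a s).card then (1:ℕ) else 0) = 0 := if_neg hc2
          by_cases hc0 : (txs a s).card = 0
          · have e3 : (if (txs a s).card = 0 then (1:ℕ) else 0) = 1 := if_pos hc0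
            rw [hzs, hhs, hcs, ctr_sil hc0 hv, e1, e2, e3]
            push_cast
            omega
          · have e3 : (if (txs a s).card = 0 then (1:ℕ) else 0) = 0 := if_neg hc0
            have hc1 : (txs a s).card = 1 := by omega
            obtain ⟨w, hw⟩ := Finset.card_eq_one.mp hc1
            have hvw : v ≠ w := fun hh => h1 (by rw [hw, hh])
            rw [hzs, hhs, hcs, ctr_heard_other hw hv hvw, e1, e2, e3]
            push_cast
            omega

end Counting

section Counting2

variable (a : ℕ → ℕ) (v t : ℕ)

lemma hw_telescope
    (hact : ∀ s, v+1 ≤ s → s ≤ t → 0 < (cbCfg a s).1 v) :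
    ∀ s, v+1 ≤ s → s ≤ t →
      (∑ u ∈ Finset.Ico (v+1) (t-1), (cbCfg a s).1 u) + cntHW a v s
        ≤ ∑ r ∈ Finset.Ico (v+1) s, (if r ∈ Finset.Ico (v+1) (t-1) then a r else 0) := by
  set J := Finset.Ico (v+1) (t-1) with hJ
  intro s hs
  induction s, hs using Nat.le_induction with
  | base =>
      intro _
      have h1 : ∑ u ∈ J, (cbCfg a (v+1)).1 u = 0 := by
        apply Finset.sum_eq_zero
        intro u hu
        exact pend_zero_of_le (by have := (Finset.mem_Ico.mp hu).1; omega)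
      rw [h1]
      simp [cntHW]
  | succ s hs ihs =>
      intro hst
      have hst' : s ≤ t := by omega
      have ih := ihs hst'
      have hvs : 0 < (cbCfg a s).1 v := hact s hs hst'
      have hHWs : cntHW a v (s+1) = cntHW a v s
          + (if (txs a s).card = 1 ∧ ¬ txs a s = {v} then 1 else 0) := by
        rw [cntHW, Finset.sum_Ico_succ_top (by omega), ← cntHW]
      have hRHS : ∑ r ∈ Finset.Ico (v+1) (s+1), (if r ∈ J then a r else 0)
          = (∑ r ∈ Finset.Ico (v+1) s, (if r ∈ J then a r else 0))
            + (if s ∈ J then a s else 0) :=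
        Finset.sum_Ico_succ_top (by omega) _
      -- split the new pend sum
      have hsplit : ∑ u ∈ J, (cbCfg a (s+1)).1 u
          = (∑ u ∈ J, (if txs a s = {u} then (cbCfg a s).1 u - 1 else (cbCfg a s).1 u))
            + (if s ∈ J then a s else 0) := by
        have : ∀ u ∈ J, (cbCfg a (s+1)).1 u
            = (if txs a s = {u} then (cbCfg a s).1 u - 1 else (cbCfg a s).1 u)
              + (if u = s then a s else 0) := fun u _ => pend_succ' a s u
        rw [Finset.sum_congr rfl this, Finset.sum_add_distrib]
        congr 1
        simp [Finset.sum_ite_eq' J s (fun _ => a s)]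
      -- key: base sum + HW-indicator ≤ old sum
      have hkey : (∑ u ∈ J, (if txs a s = {u} then (cbCfg a s).1 u - 1 else (cbCfg a s).1 u))
          + (if (txs a s).card = 1 ∧ ¬ txs a s = {v} then 1 else 0)
          ≤ ∑ u ∈ J, (cbCfg a s).1 u := by
        by_cases hHW : (txs a s).card = 1 ∧ ¬ txs a s = {v}
        · obtain ⟨w, hw⟩ := Finset.card_eq_one.mp hHW.1
          have hwmem : w ∈ txs a s := by rw [hw]; simp
          have hwP : 0 < (cbCfg a s).1 w := (mem_txs.mp hwmem).2.1
          have hws : w < s := (mem_txs.mp hwmem).1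
          have hwv : w ≠ v := fun hh => hHW.2 (by rw [hw, hh])
          -- v is not the transmitter, so its counter is ≥ 2, hence v < w
          have hvnot : v ∉ txs a s := fun hh => by
            rw [hw, Finset.mem_singleton] at hh
            exact hwv hh.symm
          have hv2 : 2 ≤ (cbCfg a s).2 v := (cbInv a s).two_le_of_notin hvs hvnot
          have hwK : (cbCfg a s).2 w ≤ 1 := (mem_txs.mp hwmem).2.2
          have hvw : v < w := by
            rcases lt_trichotomy v w with h | h | h
            · exact h
            · exact absurd h hwv.symm
            · exact absurd ((cbInv a s).hc w v h hwP hvs) (by omega)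
          have hwJ : w ∈ J := Finset.mem_Ico.mpr ⟨by omega, by omega⟩
          rw [if_pos hHW]
          rw [← Finset.add_sum_erase J _ hwJ, ← Finset.add_sum_erase J ((cbCfg a s).1) hwJ]
          have heq : ∀ u ∈ J.erase w,
              (if txs a s = {u} then (cbCfg a s).1 u - 1 else (cbCfg a s).1 u)
                = (cbCfg a s).1 u := by
            intro u hu
            have hune : u ≠ w := (Finset.mem_erase.mp hu).1
            rw [if_neg (fun hh => hune (by
              have : w ∈ ({u} : Finset ℕ) := hh ▸ hwmem
              exact (Finset.mem_singleton.mp this).symm))]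
          rw [Finset.sum_congr rfl heq, if_pos hw]
          have hrfl : (J.erase w).sum (cbCfg a s).1 = ∑ x ∈ J.erase w, (cbCfg a s).1 x := rfl
          omega
        · rw [if_neg hHW, add_zero]
          apply Finset.sum_le_sum
          intro u hu
          have huJ := Finset.mem_Ico.mp hu
          by_cases hh : txs a s = {u}
          · exfalso
            have hc1 : (txs a s).card = 1 := by rw [hh]; simp
            have huv : ¬ txs a s = {v} := fun hvv => by
              rw [hh] at hvv
              have : u = v := by
                have := Finset.mem_singleton.mp (hvv ▸ (Finset.mem_singleton.mpr rfl : u ∈ ({u}:Finset ℕ)))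
                exact this
              omega
            exact hHW ⟨hc1, huv⟩
          · rw [if_neg hh]
      calc (∑ u ∈ J, (cbCfg a (s+1)).1 u) + cntHW a v (s+1)
          = ((∑ u ∈ J, (if txs a s = {u} then (cbCfg a s).1 u - 1 else (cbCfg a s).1 u))
              + (if (txs a s).card = 1 ∧ ¬ txs a s = {v} then 1 else 0))
            + cntHW a v s + (if s ∈ J then a s else 0) := by
            rw [hsplit, hHWs]; ring
        _ ≤ (∑ u ∈ J, (cbCfg a s).1 u) + cntHW a v s + (if s ∈ J then a s else 0) := by
            omega
        _ ≤ (∑ r ∈ Finset.Ico (v+1) s, (if r ∈ J then a r else 0))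
              + (if s ∈ J then a s else 0) := by omega
        _ = _ := hRHS.symm

lemma hw_bound (htv : v + 2 ≤ t)
    (hact : ∀ s, v+1 ≤ s → s ≤ t → 0 < (cbCfg a s).1 v) :
    cntHW a v t ≤ ∑ u ∈ Finset.Ico (v+1) (t-1), a u := by
  have h := hw_telescope a v t hact t (by omega) le_rfl
  have h2 : ∑ r ∈ Finset.Ico (v+1) t, (if r ∈ Finset.Ico (v+1) (t-1) then a r else 0)
      = ∑ u ∈ Finset.Ico (v+1) (t-1), a u := by
    rw [Finset.sum_ite_mem]
    congr 1
    rw [Finset.inter_eq_right.mpr]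
    intro x hx
    have := Finset.mem_Ico.mp hx
    exact Finset.mem_Ico.mpr ⟨this.1, by omega⟩
  omega

lemma c_bound (htv : v + 2 ≤ t) (hχ : txs a (v+1) = {v}) :
    cntC a v t ≤ ∑ u ∈ Finset.Ico (v+1) (t-1), a u := by
  have h1 : cntC a v t = ((Finset.Ico (v+1) t).filter (fun r => 2 ≤ (txs a r).card)).card := by
    rw [cntC, Finset.card_filter]
  have h2 : ((Finset.Ico (v+1) t).filter (fun r => 2 ≤ (txs a r).card)).card
      ≤ ((Finset.Ico (v+1) (t-1)).filter (fun u => 1 ≤ a u)).card := by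
    apply Finset.card_le_card_of_injOn (fun r => r - 1)
    · intro r hr
      rw [Finset.mem_coe, Finset.mem_filter] at hr
      simp only [Finset.mem_coe, Finset.mem_filter]
      obtain ⟨hrI, hr2⟩ := hr
      have hrI' := Finset.mem_Ico.mp hrI
      obtain ⟨hr1, hmem, hp⟩ := collision_struct (cbInv a r) hr2
      have hrea : r ≠ v + 1 := fun hh => by
        rw [hh, hχ] at hr2
        simp at hr2
      have hale : 1 ≤ a (r-1) := by
        have hre : r - 1 + 1 = r := by omega
        have := pend_self a (r-1)
        rw [hre] at this
        omega
      exact ⟨Finset.mem_Ico.mpr ⟨by omega, by omega⟩, hale⟩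
    · intro r hr r' hr' hre
      have h1 := (Finset.mem_Ico.mp (Finset.mem_filter.mp hr).1).1
      have h2 := (Finset.mem_Ico.mp (Finset.mem_filter.mp hr').1).1
      simp only at hre
      omega
  have h3 : ((Finset.Ico (v+1) (t-1)).filter (fun u => 1 ≤ a u)).card
      ≤ ∑ u ∈ Finset.Ico (v+1) (t-1), a u := by
    calc ((Finset.Ico (v+1) (t-1)).filter (fun u => 1 ≤ a u)).card
        = ∑ u ∈ (Finset.Ico (v+1) (t-1)).filter (fun u => 1 ≤ a u), 1 := by
          rw [Finset.card_eq_sum_ones]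
      _ ≤ ∑ u ∈ (Finset.Ico (v+1) (t-1)).filter (fun u => 1 ≤ a u), a u := by
          apply Finset.sum_le_sum
          intro u hu
          exact (Finset.mem_filter.mp hu).2
      _ ≤ ∑ u ∈ Finset.Ico (v+1) (t-1), a u :=
          Finset.sum_le_sum_of_subset (Finset.filter_subset _ _)
  omega

end Counting2

lemma cb_main (ρ : ℝ) (b : ℕ) (h0 : 0 < ρ) (hρ : ρ < 1/3) (hb : 1 < b)
    (a : ℕ → ℕ) (ha : Admissible ρ b a) :
    ∀ v t : ℕ, 0 < (cbCfg a t).1 v → ((t:ℝ) - v) ≤ (3*b - 3)/(1 - 3*ρ) := by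
  have hden : (0:ℝ) < 1 - 3*ρ := by linarith
  have hb2 : (2:ℝ) ≤ b := by exact_mod_cast hb
  have hL3 : (3:ℝ) ≤ (3*b - 3)/(1 - 3*ρ) := by
    rw [le_div_iff₀ hden]
    nlinarith
  intro v
  induction v using Nat.strong_induction_on with
  | _ v IH =>
  intro t hpos
  have hvt : v < t := by
    by_contra hh
    rw [pend_zero_of_le (by omega)] at hpos
    omega
  by_cases htv : t = v + 1
  · subst htv
    push_cast
    linarith
  · have ht2 : v + 2 ≤ t := by omega
    have hact : ∀ s, v+1 ≤ s → s ≤ t → 0 < (cbCfg a s).1 v := by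
      intro s h1 h2
      have := pend_le (a := a) (r := s) (s := t) (u := v) (by omega) h2
      omega
    have hav : 0 < a v := by
      have := hact (v+1) le_rfl (by omega)
      rwa [pend_self] at this
    have hvmem : v ∈ txs a (v+1) :=
      mem_txs.mpr ⟨by omega, by rw [pend_self]; omega, by rw [ctr_fresh]; norm_num⟩
    by_cases hcol : 2 ≤ (txs a (v+1)).card
    · -- v's activation collided with an older pending station w; apply IH to w
      obtain ⟨w, hwmem, hwv⟩ := Finset.exists_mem_ne (s := txs a (v+1)) (by omega) v
      have hwlt : w < v := by
        have := (mem_txs.mp hwmem).1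
        omega
      have hwP : ∀ s, v+1 ≤ s → s ≤ t → 0 < (cbCfg a s).1 w := by
        intro s h1
        induction s, h1 using Nat.le_induction with
        | base => intro _; exact (mem_txs.mp hwmem).2.1
        | succ s hs ihs =>
            intro hst
            have hst' : s ≤ t := by omega
            have ihw := ihs hst'
            have hne : ¬ txs a s = {w} := by
              intro hh
              have hvs : 0 < (cbCfg a s).1 v := hact s hs hst'
              have hwmem' : w ∈ txs a s := by rw [hh]; simp
              have hwK : (cbCfg a s).2 w ≤ 1 := (mem_txs.mp hwmem').2.2
              by_cases hKv : (cbCfg a s).2 v ≤ 1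
              · have : v ∈ txs a s := mem_txs.mpr ⟨by omega, hvs, hKv⟩
                rw [hh, Finset.mem_singleton] at this
                omega
              · have := (cbInv a s).hc w v hwlt ihw hvs
                omega
            rw [pend_step (show w ≠ s by omega), if_neg hne]
            exact ihw
      have hwt : 0 < (cbCfg a t).1 w := hwP t (by omega) le_rfl
      have hIH := IH w hwlt t hwt
      have hcast : (w:ℝ) < v := by exact_mod_cast hwlt
      linarith
    · -- round v+1 is heard by v; direct counting
      have hc1 : (txs a (v+1)).card = 1 := by
        have : 0 < (txs a (v+1)).card := Finset.card_pos.mpr ⟨v, hvmem⟩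
        omega
      have hχ : txs a (v+1) = {v} := hit_iff.mp ⟨hvmem, hc1⟩
      set S := ∑ u ∈ Finset.Ico (v+1) (t-1), a u with hS
      have hHv : (cbCfg a t).1 v + cntHv a v t = a v := pendv_telescope a v t (by omega)
      have hHW : cntHW a v t ≤ S := hw_bound a v t ht2 hact
      have hC : cntC a v t ≤ S := c_bound a v t ht2 hχ
      have hZ : (cbCfg a t).2 v + (cntZ a v t : ℤ) ≤ (cntHv a v t : ℤ) + (cntC a v t : ℤ) :=
        ctr_telescope a v t hact t (by omega) le_rfl
      have hKt : 1 ≤ (cbCfg a t).2 v := by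
        rcases (cbInv a t).hd v hpos with h | h
        · omega
        · exact h
      have hZ' : cntZ a v t + 1 ≤ cntHv a v t + cntC a v t := by
        omega
      have hpart : t - (v+1) = cntHv a v t + cntHW a v t + cntC a v t + cntZ a v t :=
        cnt_partition a v t
      -- natural-number bound: T + 3 ≤ 2·(a v) + 3·S with T = t - v - 1
      have hT : t - (v+1) + 3 ≤ 2 * a v + 3 * S := by
        omega
      -- budget
      have hbud : ((a v : ℝ) + (S:ℝ)) ≤ ρ * ((t - (v+1) : ℕ):ℝ) + b := by
        have h := ha v (t-1-v)
        have he : v + (t-1-v) = t-1 := by omega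
        rw [he] at h
        have hsum : ∑ u ∈ Finset.Ico v (t-1), a u = a v + S := by
          rw [hS, Finset.sum_eq_sum_Ico_succ_bot (show v < t-1 by omega)]
        rw [hsum] at h
        have he2 : (t - 1 - v : ℕ) = t - (v+1) := by omega
        rw [he2] at h
        push_cast at h
        convert h using 2
      -- real arithmetic
      have hTr : ((t - (v+1) : ℕ):ℝ) = (t:ℝ) - v - 1 := by
        have : ((t - (v+1) : ℕ):ℝ) = (t:ℝ) - ((v+1 : ℕ):ℝ) :=
          by exact_mod_cast Nat.cast_sub (by omega : v + 1 ≤ t)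
        rw [this]
        push_cast
        ring
      have hTr' : ((t - (v+1) : ℕ):ℝ) + 3 ≤ 2 * (a v : ℝ) + 3 * (S:ℝ) := by
        exact_mod_cast hT
      have hA1 : (1:ℝ) ≤ (a v : ℝ) := by exact_mod_cast hav
      rw [hTr] at hTr' hbud
      rw [le_div_iff₀ hden]
      nlinarith [hbud, hTr', hA1, h0]

/-- when Counting-Backoff is executed on a channel with collision detection
against a 1-activating adversary of type `(ρ, b)` with `ρ < 1/3` and `b > 1`, every packet
is heard within `(3b − 3)/(1 − 3ρ)` rounds of its injection: the station activated in
round `v` has an empty queue at the beginning of every round `t > v + (3b − 3)/(1 − 3ρ)`. -/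
theorem counting_backoff_latency_bound (ρ : ℝ) (b : ℕ)
    (h0 : 0 < ρ) (hρ : ρ < 1/3) (hb : 1 < b)
    (a : ℕ → ℕ) (ha : Admissible ρ b a) (v t : ℕ)
    (ht : (v : ℝ) + (3 * b - 3) / (1 - 3 * ρ) < t) :
    (cbCfg a t).1 v = 0 := by
  by_contra hne
  have hpos : 0 < (cbCfg a t).1 v := Nat.pos_of_ne_zero hne
  have hmain := cb_main ρ b h0 hρ hb a ha v t hpos
  linarith
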